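/- (Lyndon–Schützenberger) If u, v, w are words over an alphabet Σ with u^m v^n = w^k ≠ ε for natural numbers m, n, k ≥ 2, then u, v and w are powers of a common word, i.e., there exists a word t with u ∈ t*, v ∈ t*, and w ∈ t*. -/

import Mathlib

/-- `wpow v n` is the word `vⁿ`, the `n`-fold concatenation of the word `v` with itself. -/
def wpow {α : Type*} (v : List α) : ℕ → List α
  | 0 => []
  | n + 1 => v ++ wpow v n

/-- A nonempty word `u` is primitive if `u = vⁿ` implies `n = 1`. -/
def Primitive {α : Type*} (u : List α) : Prop :=
  u ≠ [] ∧ ∀ (v : List α) (n : ℕ), u = wpow v n → n = 1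

namespace LS
open List
variable {α : Type*}

theorem wpow_zero (v : List α) : wpow v 0 = [] := rfl
theorem wpow_succ (v : List α) (n : ℕ) : wpow v (n+1) = v ++ wpow v n := rfl
theorem wpow_one (v : List α) : wpow v 1 = v := by simp [wpow]

theorem wpow_nil (n : ℕ) : wpow ([] : List α) n = [] := by
  induction n with
  | zero => rfl
  | succ n ih => simp [wpow, ih]

theorem length_wpow (v : List α) (n : ℕ) : (wpow v n).length = n * v.length := by
  induction n with
  | zero => simp [wpow]
  | succ n ih => simp [wpow, ih]; ring

theorem wpow_add (v : List α) (a b : ℕ) : wpow v (a + b) = wpow v a ++ wpow v b := by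
  induction a with
  | zero => simp [wpow]
  | succ a ih => rw [Nat.succ_add, wpow_succ, wpow_succ, ih, append_assoc]

theorem wpow_succ' (v : List α) (n : ℕ) : wpow v (n+1) = wpow v n ++ v := by
  rw [wpow_add, wpow_one]

theorem wpow_wpow (v : List α) (a b : ℕ) : wpow (wpow v a) b = wpow v (a * b) := by
  induction b with
  | zero => simp [wpow]
  | succ b ih => rw [wpow_succ, ih, Nat.mul_succ, Nat.add_comm, wpow_add]

theorem wpow_ne_nil {v : List α} (hv : v ≠ []) {n : ℕ} (hn : 1 ≤ n) : wpow v n ≠ [] := by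
  intro h
  have := congrArg List.length h
  rw [length_wpow] at this
  simp at this
  rcases this with h1 | h1
  · omega
  · exact hv h1

theorem eq_nil_of_wpow_eq_nil {v : List α} {n : ℕ} (hn : 1 ≤ n) (h : wpow v n = []) : v = [] := by
  by_contra hv
  exact wpow_ne_nil hv hn h

theorem swap_pow (a b : List α) (c : ℕ) :
    a ++ wpow (b ++ a) c = wpow (a ++ b) c ++ a := by
  induction c with
  | zero => simp [wpow]
  | succ c ih =>
    rw [wpow_succ, wpow_succ]
    calc a ++ ((b ++ a) ++ wpow (b ++ a) c) = (a ++ b) ++ (a ++ wpow (b ++ a) c) := by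
          simp [append_assoc]
      _ = (a ++ b) ++ (wpow (a ++ b) c ++ a) := by rw [ih]
      _ = ((a ++ b) ++ wpow (a ++ b) c) ++ a := by simp [append_assoc]

theorem conj_pow (t₁ t₂ : List α) (j : ℕ) :
    t₂ ++ wpow (t₁ ++ t₂) j ++ t₁ = wpow (t₂ ++ t₁) (j + 1) := by
  have h := swap_pow t₂ t₁ j
  calc t₂ ++ wpow (t₁ ++ t₂) j ++ t₁ = (t₂ ++ wpow (t₁ ++ t₂) j) ++ t₁ := rfl
    _ = (wpow (t₂ ++ t₁) j ++ t₂) ++ t₁ := by rw [h]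
    _ = wpow (t₂ ++ t₁) j ++ (t₂ ++ t₁) := by simp [append_assoc]
    _ = wpow (t₂ ++ t₁) (j + 1) := (wpow_succ' _ _).symm

theorem take_wpow {g : List α} {c ρ N : ℕ} (h1 : ρ ≤ g.length)
    (h2 : c * g.length + ρ ≤ N * g.length) :
    List.take (c * g.length + ρ) (wpow g N) = wpow g c ++ List.take ρ g := by
  rcases Nat.eq_zero_or_pos g.length with h0 | hgl
  · have hg : g = [] := List.eq_nil_of_length_eq_zero h0
    subst hg
    simp at h1
    simp [h1, wpow_nil]
  have hcN : c ≤ N := by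
    by_contra h
    push_neg at h
    have hh := Nat.mul_le_mul_right g.length (show N + 1 ≤ c by omega)
    have hs : (N + 1) * g.length = N * g.length + g.length := Nat.succ_mul N g.length
    omega
  have hsplit : wpow g N = wpow g c ++ wpow g (N - c) := by
    rw [← wpow_add]; congr 1; omega
  rw [hsplit, List.take_append]
  have hlen : (wpow g c).length = c * g.length := length_wpow g c
  have h3 : c * g.length + ρ - (wpow g c).length = ρ := by rw [hlen]; omega
  rw [h3]
  have h4 : List.take (c * g.length + ρ) (wpow g c) = wpow g c := by
    apply List.take_of_length_le; rw [hlen]; omega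
  rw [h4]
  congr 1
  rcases Nat.eq_zero_or_pos ρ with hρ | hρ
  · simp [hρ]
  · have hNc : c < N := by
      by_contra h
      push_neg at h
      have hcN' : c = N := Nat.le_antisymm hcN h
      subst hcN'
      omega
    have hx : wpow g (N - c) = g ++ wpow g (N - c - 1) := by
      rw [← wpow_succ]; congr 1; omega
    rw [hx, List.take_append]
    have : ρ - g.length = 0 := by omega
    rw [this]
    simp

theorem drop_wpow {g : List α} {c ρ N : ℕ} (h1 : ρ ≤ g.length) (h2 : c < N) :
    List.drop (c * g.length + ρ) (wpow g N) = List.drop ρ g ++ wpow g (N - c - 1) := by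
  have : wpow g N = wpow g c ++ (g ++ wpow g (N - c - 1)) := by
    rw [← wpow_succ, ← wpow_add]; congr 1; omega
  rw [this, List.drop_append]
  have hlen : (wpow g c).length = c * g.length := length_wpow g c
  have h3 : List.drop (c * g.length + ρ) (wpow g c) = [] := by
    apply List.drop_eq_nil_of_le; rw [hlen]; omega
  rw [h3, hlen]
  have h4 : c * g.length + ρ - c * g.length = ρ := by omega
  rw [h4, List.drop_append]
  have : ρ - g.length = 0 := by omega
  rw [this]
  simp

theorem getElem?_wpow {v : List α} {N i : ℕ} (h : i < N * v.length) :
    (wpow v N)[i]? = v[i % v.length]? := by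
  induction N generalizing i with
  | zero => simp at h
  | succ N ih =>
    rw [wpow_succ]
    rcases lt_or_ge i v.length with hi | hi
    · rw [List.getElem?_append_left hi, Nat.mod_eq_of_lt hi]
    · rw [List.getElem?_append_right hi]
      have hs : (N+1) * v.length = N * v.length + v.length := Nat.succ_mul N v.length
      have h2 : i - v.length < N * v.length := by omega
      rw [ih h2, Nat.mod_eq_sub_mod hi]

end LS
namespace LS
open List
variable {α : Type*}

/-- `s` has period `p`. -/
def HasPeriod (s : List α) (p : ℕ) : Prop :=
  ∀ i, i + p < s.length → s[i + p]? = s[i]?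

theorem hasPeriod_wpow (v : List α) (N : ℕ) : HasPeriod (wpow v N) v.length := by
  intro i hi
  rw [length_wpow] at hi
  rw [getElem?_wpow hi, getElem?_wpow (by omega)]
  congr 1
  exact Nat.add_mod_right i v.length

theorem hasPeriod_take {s : List α} {p : ℕ} (h : HasPeriod s p) (L : ℕ) :
    HasPeriod (s.take L) p := by
  intro i hi
  rw [List.length_take] at hi
  have h1 : i + p < s.length := lt_of_lt_of_le hi (min_le_right _ _)
  have h2 : i + p < L := lt_of_lt_of_le hi (min_le_left _ _)
  rw [List.getElem?_take, List.getElem?_take, if_pos h2, if_pos (by omega)]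
  exact h i h1

theorem hasPeriod_prefix {t s : List α} {p : ℕ} (hpre : t <+: s) (h : HasPeriod s p) :
    HasPeriod t p := by
  obtain ⟨r, hr⟩ := hpre
  have : t = s.take t.length := by rw [← hr, List.take_left]
  rw [this]
  exact hasPeriod_take h _

theorem hasPeriod_of_append {u v w : List α} (h : u ++ v = v ++ w) :
    HasPeriod (u ++ v) u.length := by
  intro i hi
  rw [List.length_append] at hi
  have hiv : i < v.length := by omega
  have h1 : (u ++ v)[i + u.length]? = v[i]? := by
    rw [Nat.add_comm, List.getElem?_append_right (Nat.le_add_right _ _)]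
    congr 1
    omega
  have h2 : (u ++ v)[i]? = v[i]? := by
    rw [h, List.getElem?_append_left hiv]
  rw [h1, h2]

/-- Weak Fine–Wilf. -/
theorem fine_wilf : ∀ (N : ℕ) {s : List α} {p q : ℕ}, p + q ≤ N → 0 < p → 0 < q →
    p + q ≤ s.length → HasPeriod s p → HasPeriod s q → HasPeriod s (Nat.gcd p q) := by
  intro N
  induction N with
  | zero => intro s p q h hp hq; omega
  | succ N ih =>
    intro s p q hN hp hq hlen hP hQ
    rcases lt_trichotomy p q with hlt | heq | hgt
    · -- p < q : reduce q to q - p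
      have hQP : HasPeriod s (q - p) := by
        intro i hi
        rcases lt_or_ge (i + q) s.length with hc | hc
        · have e1 : s[i + (q - p) + p]? = s[i + (q - p)]? := hP _ (by omega)
          have e2 : s[i + q]? = s[i]? := hQ _ hc
          have e3 : i + (q - p) + p = i + q := by omega
          rw [e3] at e1
          rw [← e1, e2]
        · have hip : p ≤ i := by omega
          have e1 : s[i - p + p]? = s[i - p]? := hP _ (by omega)
          have e2 : s[i - p + q]? = s[i - p]? := hQ _ (by omega)
          have e3 : i - p + p = i := by omega
          have e4 : i - p + q = i + (q - p) := by omega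
          rw [e3] at e1
          rw [e4] at e2
          rw [e2, e1]
      have hg : Nat.gcd p (q - p) = Nat.gcd p q := by
        conv_rhs => rw [show q = (q - p) + p by omega]
        rw [Nat.gcd_add_self_right]
      rw [← hg]
      exact ih (by omega) hp (by omega) (by omega) hP hQP
    · subst heq
      rw [Nat.gcd_self]
      exact hP
    · -- q < p : symmetric
      have hPQ : HasPeriod s (p - q) := by
        intro i hi
        rcases lt_or_ge (i + p) s.length with hc | hc
        · have e1 : s[i + (p - q) + q]? = s[i + (p - q)]? := hQ _ (by omega)
          have e2 : s[i + p]? = s[i]? := hP _ hc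
          have e3 : i + (p - q) + q = i + p := by omega
          rw [e3] at e1
          rw [← e1, e2]
        · have e1 : s[i - q + q]? = s[i - q]? := hQ _ (by omega)
          have e2 : s[i - q + p]? = s[i - q]? := hP _ (by omega)
          have e3 : i - q + q = i := by omega
          have e4 : i - q + p = i + (p - q) := by omega
          rw [e3] at e1
          rw [e4] at e2
          rw [e2, e1]
      have hg : Nat.gcd (p - q) q = Nat.gcd p q := by
        conv_rhs => rw [show p = (p - q) + q by omega]
        rw [Nat.gcd_add_self_left]
      rw [← hg]
      exact ih (by omega) (by omega) hq (by omega) hPQ hQ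

/-- extraction: a `g`-periodic word's prefix of length `a*g` is a power of its `g`-prefix. -/
theorem take_eq_wpow_take {s : List α} {g : ℕ} (h : HasPeriod s g) (hg : 0 < g) :
    ∀ (a : ℕ), a * g ≤ s.length → s.take (a * g) = wpow (s.take g) a := by
  -- first: slice constancy
  have slice : ∀ j : ℕ, (j + 1) * g ≤ s.length → (s.drop (j * g)).take g = s.take g := by
    intro j
    induction j with
    | zero => intro _; simp
    | succ j ih =>
      intro hj
      have e2 : (j + 1 + 1) * g = (j + 1) * g + g := by ring
      have e1 : (j + 1) * g = j * g + g := by ring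
      have hj' : (j + 1) * g ≤ s.length := by omega
      rw [← ih hj']
      apply List.ext_getElem?
      intro t
      rw [List.getElem?_take, List.getElem?_take]
      rcases lt_or_ge t g with ht | ht
      · rw [if_pos ht, if_pos ht, List.getElem?_drop, List.getElem?_drop]
        have e : (j + 1) * g + t = j * g + t + g := by ring
        rw [e]
        apply h
        omega
      · rw [if_neg (by omega), if_neg (by omega)]
  intro a
  induction a with
  | zero => intro _; simp [wpow]
  | succ a ih =>
    intro ha
    have e : (a + 1) * g = a * g + g := by ring
    have ha' : a * g ≤ s.length := by omega
    rw [wpow_succ']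
    rw [e, ← ih ha']
    rw [List.take_add]
    congr 1
    have := slice a (by omega)
    rw [this]

end LS
namespace LS
open List
variable {α : Type*}

theorem take_wpow_self {v : List α} {N : ℕ} (hN : 1 ≤ N) :
    List.take v.length (wpow v N) = v := by
  have : wpow v N = v ++ wpow v (N - 1) := by
    rw [← wpow_succ]; congr 1; omega
  rw [this, List.take_left]

theorem take_eq_of_prefix_eq {s r w : List α} (h : s ++ r = w) {L : ℕ} (hL : L ≤ s.length) :
    List.take L w = List.take L s := by
  rw [← h, List.take_append]
  have : L - s.length = 0 := by omega
  rw [this]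
  simp

theorem comm_common_root {u v : List α} (h : u ++ v = v ++ u) :
    ∃ t i j, u = wpow t i ∧ v = wpow t j := by
  rcases eq_or_ne u [] with hu | hu
  · exact ⟨v, 0, 1, by simp [hu, wpow], (wpow_one v).symm⟩
  rcases eq_or_ne v [] with hv | hv
  · exact ⟨u, 1, 0, (wpow_one u).symm, by simp [hv, wpow]⟩
  have hul : 0 < u.length := List.length_pos_iff.mpr hu
  have hvl : 0 < v.length := List.length_pos_iff.mpr hv
  have hP : HasPeriod (u ++ v) u.length := hasPeriod_of_append h
  have hQ : HasPeriod (u ++ v) v.length := by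
    have := hasPeriod_of_append h.symm
    rwa [h]
  have hslen : u.length + v.length ≤ (u ++ v).length := by rw [List.length_append]
  have hper : HasPeriod (u ++ v) (Nat.gcd u.length v.length) :=
    fine_wilf (u.length + v.length) le_rfl hul hvl hslen hP hQ
  have hγpos : 0 < Nat.gcd u.length v.length := Nat.gcd_pos_of_pos_left _ hul
  refine ⟨(u ++ v).take (Nat.gcd u.length v.length), u.length / Nat.gcd u.length v.length,
    v.length / Nat.gcd u.length v.length, ?_, ?_⟩
  · have hdvd : Nat.gcd u.length v.length ∣ u.length := Nat.gcd_dvd_left _ _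
    have he : u.length / Nat.gcd u.length v.length * Nat.gcd u.length v.length = u.length :=
      Nat.div_mul_cancel hdvd
    have h2 := take_eq_wpow_take hper hγpos (u.length / Nat.gcd u.length v.length)
      (by rw [he]; omega)
    rw [he, List.take_left] at h2
    exact h2
  · have hdvd : Nat.gcd u.length v.length ∣ v.length := Nat.gcd_dvd_right _ _
    have he : v.length / Nat.gcd u.length v.length * Nat.gcd u.length v.length = v.length :=
      Nat.div_mul_cancel hdvd
    have h2 := take_eq_wpow_take hper hγpos (v.length / Nat.gcd u.length v.length)
      (by rw [he]; omega)
    rw [he] at h2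
    rw [show List.take v.length (u ++ v) = v by rw [h]; exact List.take_left] at h2
    exact h2

theorem poweq {a b : List α} {N M : ℕ} (h : wpow a N = wpow b M) (hN : 2 ≤ N) (hM : 1 ≤ M) :
    ∃ t i j, a = wpow t i ∧ b = wpow t j := by
  rcases eq_or_ne a [] with ha | ha
  · have : wpow b M = [] := by rw [← h, ha, wpow_nil]
    have hb := eq_nil_of_wpow_eq_nil hM this
    exact ⟨[], 0, 0, by simp [ha, wpow], by simp [hb, wpow]⟩
  rcases eq_or_ne b [] with hb | hb
  · have : wpow a N = [] := by rw [h, hb, wpow_nil]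
    have ha' := eq_nil_of_wpow_eq_nil (by omega : 1 ≤ N) this
    exact absurd ha' ha
  rcases eq_or_ne M 1 with hM1 | hM1
  · subst hM1
    rw [wpow_one] at h
    exact ⟨a, 1, N, (wpow_one a).symm, h.symm⟩
  have hM2 : 2 ≤ M := by omega
  have hal : 0 < a.length := List.length_pos_iff.mpr ha
  have hbl : 0 < b.length := List.length_pos_iff.mpr hb
  have hP : HasPeriod (wpow a N) a.length := hasPeriod_wpow a N
  have hQ : HasPeriod (wpow a N) b.length := by rw [h]; exact hasPeriod_wpow b M
  have hslen : a.length + b.length ≤ (wpow a N).length := by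
    have h1 : (wpow a N).length = N * a.length := length_wpow a N
    have h2 : (wpow a N).length = M * b.length := by rw [h, length_wpow]
    nlinarith
  have hper : HasPeriod (wpow a N) (Nat.gcd a.length b.length) :=
    fine_wilf (a.length + b.length) le_rfl hal hbl hslen hP hQ
  have hγpos : 0 < Nat.gcd a.length b.length := Nat.gcd_pos_of_pos_left _ hal
  refine ⟨(wpow a N).take (Nat.gcd a.length b.length), a.length / Nat.gcd a.length b.length,
    b.length / Nat.gcd a.length b.length, ?_, ?_⟩
  · have hdvd : Nat.gcd a.length b.length ∣ a.length := Nat.gcd_dvd_left _ _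
    have he : a.length / Nat.gcd a.length b.length * Nat.gcd a.length b.length = a.length :=
      Nat.div_mul_cancel hdvd
    have h2 := take_eq_wpow_take hper hγpos (a.length / Nat.gcd a.length b.length)
      (by rw [he]; omega)
    rw [he, take_wpow_self (by omega : 1 ≤ N)] at h2
    exact h2
  · have hdvd : Nat.gcd a.length b.length ∣ b.length := Nat.gcd_dvd_right _ _
    have he : b.length / Nat.gcd a.length b.length * Nat.gcd a.length b.length = b.length :=
      Nat.div_mul_cancel hdvd
    have h2 := take_eq_wpow_take hper hγpos (b.length / Nat.gcd a.length b.length)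
      (by rw [he]; omega)
    rw [he] at h2
    rw [show List.take b.length (wpow a N) = b by rw [h]; exact take_wpow_self (by omega)] at h2
    exact h2

theorem exists_prim_root : ∀ (L : ℕ) (w : List α), w.length ≤ L → w ≠ [] →
    ∃ g i, Primitive g ∧ 1 ≤ i ∧ w = wpow g i := by
  intro L
  induction L with
  | zero =>
    intro w hL hw
    exact absurd (List.eq_nil_of_length_eq_zero (by omega)) hw
  | succ L ih =>
    intro w hL hw
    by_cases hp : Primitive w
    · exact ⟨w, 1, hp, le_rfl, (wpow_one w).symm⟩
    · rw [Primitive, not_and_or] at hp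
      rcases hp with h1 | h2
      · exact absurd hw (by simpa using h1)
      push_neg at h2
      obtain ⟨v, n, hvn, hn1⟩ := h2
      rcases Nat.eq_zero_or_pos n with hn0 | hn0
      · subst hn0; exact absurd hvn (by simpa [wpow] using hw)
      have hn2 : 2 ≤ n := by omega
      have hv : v ≠ [] := by
        intro hv0
        rw [hv0, wpow_nil] at hvn
        exact hw hvn
      have hvl : 0 < v.length := List.length_pos_iff.mpr hv
      have hwl : w.length = n * v.length := by rw [hvn, length_wpow]
      have hvlt : v.length ≤ L := by nlinarith
      obtain ⟨g, j, hg, hj, hvg⟩ := ih v hvlt hv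
      refine ⟨g, j * n, hg, Nat.mul_pos (by omega) (by omega), ?_⟩
      rw [hvn, hvg, wpow_wpow]

theorem prim_root_unique {f γ : List α} (hf : Primitive f) (hγ : Primitive γ)
    {e ee : ℕ} (he : 1 ≤ e) (hee : 1 ≤ ee) (h : wpow f e = wpow γ ee) : f = γ := by
  have key : ∀ t i j, f = wpow t i → γ = wpow t j → f = γ := by
    intro t i j h1 h2
    have hi := hf.2 t i h1
    have hj := hγ.2 t j h2
    subst hi; subst hj
    rw [h1, h2]
  rcases eq_or_ne e 1 with he1 | he1
  · rcases eq_or_ne ee 1 with hee1 | hee1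
    · subst he1; subst hee1; rwa [wpow_one, wpow_one] at h
    · obtain ⟨t, i, j, h1, h2⟩ := poweq h.symm (by omega) he
      exact key t j i h2 h1
  · obtain ⟨t, i, j, h1, h2⟩ := poweq h (by omega) hee
    exact key t i j h1 h2

theorem prim_no_rot {γ u v : List α} (hp : Primitive γ) (h1 : γ = u ++ v) (h2 : γ = v ++ u)
    (hu : u ≠ []) (hv : v ≠ []) : False := by
  have heq : u ++ v = v ++ u := by rw [← h1, ← h2]
  obtain ⟨t, i, j, hut, hvt⟩ := comm_common_root heq
  have hγt : γ = wpow t (i + j) := by rw [h1, hut, hvt, wpow_add]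
  have := hp.2 t (i + j) hγt
  have hi : i ≠ 0 := by rintro rfl; exact hu hut
  have hj : j ≠ 0 := by rintro rfl; exact hv hvt
  omega

theorem sync {g l r : List α} (hp : Primitive g) {N : ℕ} (h : l ++ g ++ r = wpow g N) :
    g.length ∣ l.length := by
  have hg : g ≠ [] := hp.1
  have hgl : 0 < g.length := List.length_pos_iff.mpr hg
  have hlen : l.length + g.length + r.length = N * g.length := by
    have := congrArg List.length h
    simp [length_wpow, List.length_append] at this
    omega
  set b := l.length % g.length with hb
  set a := l.length / g.length with ha
  have hma : a * g.length = g.length * (l.length / g.length) := by rw [ha, Nat.mul_comm]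
  have hdm := Nat.div_add_mod l.length g.length
  have hab : a * g.length + b = l.length := by omega
  rcases Nat.eq_zero_or_pos b with hb0 | hbpos
  · exact Nat.dvd_of_mod_eq_zero hb0
  exfalso
  have hbL : b < g.length := Nat.mod_lt _ hgl
  have haN : a + 1 < N := by
    by_contra hc
    push_neg at hc
    have h5 : N * g.length ≤ (a + 1) * g.length := Nat.mul_le_mul_right _ hc
    have he : (a + 1) * g.length = a * g.length + g.length := by ring
    omega
  have hslice : List.take g.length (List.drop l.length (wpow g N)) = g := by
    rw [← h]
    have h6 : l ++ g ++ r = l ++ (g ++ r) := by simp [append_assoc]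
    rw [h6, List.drop_left, List.take_left]
  have hdropa : List.drop (a * g.length) (wpow g N) = wpow g (N - a) := by
    have h0 := drop_wpow (g := g) (c := a) (ρ := 0) (N := N) (by omega) (by omega)
    rw [Nat.add_zero] at h0
    rw [h0, List.drop_zero, ← wpow_succ]
    congr 1
    omega
  have hslice2 : List.take g.length (List.drop b (wpow g (N - a))) = g := by
    rw [← hdropa, List.drop_drop]
    rw [show a * g.length + b = l.length from hab]
    exact hslice
  have hcomp : List.drop b (wpow g (N - a)) = List.drop b g ++ wpow g (N - a - 1) := by
    have h0 := drop_wpow (g := g) (c := 0) (ρ := b) (N := N - a) (by omega) (by omega)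
    simpa using h0
  have htb : List.take b (wpow g (N - a - 1)) = List.take b g := by
    have h0 := take_wpow (g := g) (c := 0) (ρ := b) (N := N - a - 1) (by omega) (by
      have h8 : 1 * g.length ≤ (N - a - 1) * g.length :=
        Nat.mul_le_mul_right _ (by omega)
      omega)
    simpa [wpow] using h0
  have hcomp2 : List.take g.length (List.drop b g ++ wpow g (N - a - 1)) =
      List.drop b g ++ List.take b g := by
    rw [List.take_append]
    have h5 : (List.drop b g).length = g.length - b := by simp
    have h6 : List.take g.length (List.drop b g) = List.drop b g := by
      apply List.take_of_length_le; omega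
    rw [h6, h5, show g.length - (g.length - b) = b by omega, htb]
  have hrot : g = List.drop b g ++ List.take b g := by
    conv_lhs => rw [← hslice2]
    rw [hcomp, hcomp2]
  refine prim_no_rot hp (List.take_append_drop b g).symm hrot ?_ ?_
  · apply List.length_pos_iff.mp
    rw [List.length_take]
    omega
  · apply List.length_pos_iff.mp
    rw [List.length_drop]
    omega

end LS
namespace LS
open List
variable {α : Type*}

theorem slide {f : List α} {E o L : ℕ} (h : o + f.length + L ≤ E * f.length) :
    List.take L (List.drop (o + f.length) (wpow f E)) = List.take L (List.drop o (wpow f E)) := by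
  apply List.ext_getElem?
  intro t
  rw [List.getElem?_take, List.getElem?_take]
  rcases lt_or_ge t L with ht | ht
  · rw [if_pos ht, if_pos ht, List.getElem?_drop, List.getElem?_drop]
    have hper := hasPeriod_wpow f E
    have := hper (o + t) (by rw [length_wpow]; omega)
    rw [show o + t + f.length = o + f.length + t by omega] at this
    exact this
  · rw [if_neg (by omega), if_neg (by omega)]

theorem slice_occ {w u : List α} {o : ℕ} (h : List.take u.length (List.drop o w) = u) :
    w = List.take o w ++ u ++ List.drop (o + u.length) w := by
  conv_lhs => rw [← List.take_append_drop o w]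
  rw [append_assoc]
  congr 1
  conv_lhs => rw [← List.take_append_drop u.length (List.drop o w), h, List.drop_drop]

theorem prefix_ext (v : List α) : ∀ (N : ℕ) (w : List α),
    w = List.take w.length (v ++ w) → w.length ≤ N * v.length →
    w = List.take w.length (wpow v N) := by
  intro N
  induction N with
  | zero =>
    intro w h hlen
    have hw : w = [] := by simpa using hlen
    subst hw
    simp
  | succ N ih =>
    intro w h hlen
    rcases le_or_gt w.length v.length with hle | hlt
    · have h1 : w = List.take w.length v := by
        conv_lhs => rw [h]
        rw [List.take_append, show w.length - v.length = 0 by omega]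
        simp
      rw [wpow_succ, List.take_append,
        show w.length - v.length = 0 by omega]
      simp only [List.take_zero, List.append_nil]
      exact h1
    · have hvl : 0 < v.length := by
        rcases Nat.eq_zero_or_pos v.length with h0 | h0
        · exfalso; rw [h0, Nat.mul_zero] at hlen; omega
        · exact h0
      have hmul : (N + 1) * v.length = N * v.length + v.length := by ring
      have hw : w = v ++ List.take (w.length - v.length) w := by
        conv_lhs => rw [h]
        rw [List.take_append,
          List.take_of_length_le (by omega : v.length ≤ w.length)]
      have hlenw' : (List.take (w.length - v.length) w).length = w.length - v.length := by
        rw [List.length_take]; omega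
      have h' : List.take (w.length - v.length) w =
          List.take (List.take (w.length - v.length) w).length
            (v ++ List.take (w.length - v.length) w) := by
        rw [hlenw']
        conv_rhs => rw [← hw]
      have hih := ih (List.take (w.length - v.length) w) h' (by omega)
      rw [hlenw'] at hih
      rw [wpow_succ]
      conv_lhs => rw [hw]
      conv_rhs => rw [List.take_append,
        List.take_of_length_le (show v.length ≤ w.length by omega)]
      congr 1

theorem swap_instance {x y z : List α} {m n k : ℕ} (hk : 1 ≤ k) (hz : z ≠ [])
    (hy : wpow y n ≠ []) (heq : wpow x m ++ wpow y n = wpow z k) :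
    ∃ z' : List α, z'.length = z.length ∧ wpow y n ++ wpow x m = wpow z' k ∧
      (∃ u v : List α, z = u ++ v ∧ z' = v ++ u) := by
  have hzl : 0 < z.length := List.length_pos_iff.mpr hz
  have hlen : m * x.length + n * y.length = k * z.length := by
    have := congrArg List.length heq
    rw [List.length_append, length_wpow, length_wpow, length_wpow] at this
    exact this
  have hylen : 0 < n * y.length := by
    have := List.length_pos_iff.mpr hy
    rwa [length_wpow] at this
  have ho : m * x.length < k * z.length := by omega
  obtain ⟨c, ρ, hcρ, hρz⟩ : ∃ c ρ, c * z.length + ρ = m * x.length ∧ ρ < z.length := by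
    refine ⟨m * x.length / z.length, m * x.length % z.length, ?_, Nat.mod_lt _ hzl⟩
    rw [Nat.mul_comm]
    exact Nat.div_add_mod _ _
  have hck : c < k := by
    by_contra hcon
    push_neg at hcon
    have : k * z.length ≤ c * z.length := Nat.mul_le_mul_right _ hcon
    omega
  have hxm : wpow x m = wpow z c ++ List.take ρ z := by
    have h1 : List.take (m * x.length) (wpow z k) = wpow x m := by
      have h2 : m * x.length = (wpow x m).length := (length_wpow x m).symm
      rw [← heq, h2, List.take_left]
    rw [← h1, ← hcρ]
    exact take_wpow (by omega) (by omega)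
  have hyn : wpow y n = List.drop ρ z ++ wpow z (k - c - 1) := by
    have h1 : List.drop (m * x.length) (wpow z k) = wpow y n := by
      have h2 : m * x.length = (wpow x m).length := (length_wpow x m).symm
      rw [← heq, h2, List.drop_left]
    rw [← h1, ← hcρ]
    exact drop_wpow (by omega) hck
  refine ⟨List.drop ρ z ++ List.take ρ z, ?_, ?_, List.take ρ z, List.drop ρ z,
    (List.take_append_drop ρ z).symm, rfl⟩
  · rw [List.length_append, List.length_drop, List.length_take]
    omega
  rw [hxm, hyn]
  have key := conj_pow (List.take ρ z) (List.drop ρ z) (k - 1)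
  rw [List.take_append_drop] at key
  calc (List.drop ρ z ++ wpow z (k - c - 1)) ++ (wpow z c ++ List.take ρ z)
      = List.drop ρ z ++ (wpow z (k - c - 1) ++ wpow z c) ++ List.take ρ z := by
        simp [append_assoc]
    _ = List.drop ρ z ++ wpow z (k - 1) ++ List.take ρ z := by
        rw [← wpow_add, show k - c - 1 + c = k - 1 by omega]
    _ = wpow (List.drop ρ z ++ List.take ρ z) (k - 1 + 1) := key
    _ = wpow (List.drop ρ z ++ List.take ρ z) k := by congr 1; omega

theorem finish_zroot {x y z t : List α} {m n k : ℕ} (hk : 2 ≤ k)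
    (heq : wpow x m ++ wpow y n = wpow z k)
    (hx : ∃ i, x = wpow t i) (hy : ∃ j, y = wpow t j) :
    ∃ t' : List α, (∃ i, x = wpow t' i) ∧ (∃ j, y = wpow t' j) ∧ (∃ l, z = wpow t' l) := by
  obtain ⟨i, hi⟩ := hx
  obtain ⟨j, hj⟩ := hy
  have hzk : wpow z k = wpow t (i * m + j * n) := by
    rw [← heq, hi, hj, wpow_wpow, wpow_wpow, wpow_add]
  rcases Nat.eq_zero_or_pos (i * m + j * n) with hS | hS
  · have hznil : z = [] := by
      apply eq_nil_of_wpow_eq_nil (show 1 ≤ k by omega)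
      rw [hzk, hS, wpow_zero]
    exact ⟨t, ⟨i, hi⟩, ⟨j, hj⟩, ⟨0, by rw [hznil, wpow_zero]⟩⟩
  obtain ⟨s, a, b, hzs, hts⟩ := poweq hzk hk hS
  exact ⟨s, ⟨b * i, by rw [hi, hts, wpow_wpow]⟩, ⟨b * j, by rw [hj, hts, wpow_wpow]⟩, ⟨a, hzs⟩⟩

theorem case1 {x y z : List α} {m n k : ℕ} (hn : 2 ≤ n) (hk : 1 ≤ k) (hz : z ≠ [])
    (heq : wpow x m ++ wpow y n = wpow z k)
    (hbig : x.length + z.length ≤ m * x.length) :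
    ∃ t : List α, (∃ i, x = wpow t i) ∧ (∃ j, y = wpow t j) ∧ (∃ l, z = wpow t l) := by
  have hzl : 0 < z.length := List.length_pos_iff.mpr hz
  have hxl : 0 < x.length := by
    rcases Nat.eq_zero_or_pos x.length with h0 | h0
    · exfalso; rw [h0, Nat.mul_zero] at hbig; omega
    · exact h0
  have hm1 : 1 ≤ m := by
    rcases Nat.eq_zero_or_pos m with h0 | h0
    · subst h0; rw [Nat.zero_mul] at hbig; omega
    · exact h0
  have hP : HasPeriod (wpow x m) x.length := hasPeriod_wpow x m
  have hQ : HasPeriod (wpow x m) z.length :=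
    hasPeriod_prefix ⟨wpow y n, heq⟩ (hasPeriod_wpow z k)
  have hslen : x.length + z.length ≤ (wpow x m).length := by rw [length_wpow]; omega
  have hper : HasPeriod (wpow x m) (Nat.gcd x.length z.length) :=
    fine_wilf _ le_rfl hxl hzl hslen hP hQ
  have hγpos : 0 < Nat.gcd x.length z.length := Nat.gcd_pos_of_pos_left _ hxl
  set γ := Nat.gcd x.length z.length with hγ
  set τ := (wpow x m).take γ with hτ
  have hxdvd : γ ∣ x.length := Nat.gcd_dvd_left _ _
  have hzdvd : γ ∣ z.length := Nat.gcd_dvd_right _ _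
  obtain ⟨xx, hxe⟩ : ∃ xx, xx * γ = x.length :=
    ⟨x.length / γ, Nat.div_mul_cancel hxdvd⟩
  obtain ⟨zz, hze⟩ : ∃ zz, zz * γ = z.length :=
    ⟨z.length / γ, Nat.div_mul_cancel hzdvd⟩
  have hmx : x.length ≤ m * x.length := Nat.le_mul_of_pos_left x.length (by omega)
  have hxw : x = wpow τ xx := by
    have h2 := take_eq_wpow_take hper hγpos xx (by rw [length_wpow]; omega)
    rw [hxe, take_wpow_self hm1] at h2
    exact h2
  have hzw : z = wpow τ zz := by
    have h2 := take_eq_wpow_take hper hγpos zz (by rw [length_wpow]; omega)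
    rw [hze] at h2
    have h3 : List.take z.length (wpow z k) = List.take z.length (wpow x m) :=
      take_eq_of_prefix_eq heq (by rw [length_wpow]; omega)
    rw [take_wpow_self hk] at h3
    rw [← h3] at h2
    exact h2
  have hlen : m * x.length + n * y.length = k * z.length := by
    have := congrArg List.length heq
    rw [List.length_append, length_wpow, length_wpow, length_wpow] at this
    exact this
  have hexp : xx * m ≤ zz * k := by
    refine Nat.le_of_mul_le_mul_right ?_ hγpos
    calc xx * m * γ = m * (xx * γ) := by ring
      _ = m * x.length := by rw [hxe]
      _ ≤ k * z.length := by omega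
      _ = zz * k * γ := by rw [← hze]; ring
  have hsplit : wpow z k = wpow x m ++ wpow τ (zz * k - xx * m) := by
    rw [hzw, wpow_wpow, hxw, wpow_wpow, ← wpow_add]
    congr 1
    omega
  have hyw : wpow y n = wpow τ (zz * k - xx * m) :=
    List.append_cancel_left (heq.trans hsplit)
  rcases eq_or_ne y [] with hy | hy
  · exact ⟨τ, ⟨xx, hxw⟩, ⟨0, by rw [hy, wpow_zero]⟩, ⟨zz, hzw⟩⟩
  have hc1 : 1 ≤ zz * k - xx * m := by
    rcases Nat.eq_zero_or_pos (zz * k - xx * m) with h0 | h0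
    · rw [h0, wpow_zero] at hyw
      exact absurd hyw (wpow_ne_nil hy (by omega))
    · exact h0
  obtain ⟨s, a, b, hys, hτs⟩ := poweq hyw hn hc1
  exact ⟨s, ⟨b * xx, by rw [hxw, hτs, wpow_wpow]⟩, ⟨a, hys⟩,
    ⟨b * zz, by rw [hzw, hτs, wpow_wpow]⟩⟩

end LS
namespace LS
open List
variable {α : Type*}

theorem rot_dvd {γ : List α} (hp : Primitive γ) {D : ℕ}
    (h : ∀ t, t < γ.length → γ[(t + D) % γ.length]? = γ[t]?) : γ.length ∣ D := by
  have hγ : γ ≠ [] := hp.1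
  have hL : 0 < γ.length := List.length_pos_iff.mpr hγ
  rcases Nat.eq_zero_or_pos (D % γ.length) with hν0 | hνpos
  · exact Nat.dvd_of_mod_eq_zero hν0
  exfalso
  have hν : D % γ.length < γ.length := Nat.mod_lt _ hL
  have hR : List.drop (D % γ.length) γ ++ List.take (D % γ.length) γ = γ := by
    apply List.ext_getElem?
    intro t
    rcases lt_or_ge t (γ.length - D % γ.length) with ht | ht
    · rw [List.getElem?_append_left (by rw [List.length_drop]; omega), List.getElem?_drop]
      have h1 := h t (by omega)
      have h2 : (t + D) % γ.length = t + D % γ.length := by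
        rw [Nat.add_mod, Nat.mod_eq_of_lt (show t < γ.length by omega), Nat.mod_eq_of_lt]
        omega
      rw [h2] at h1
      rw [show D % γ.length + t = t + D % γ.length by omega]
      exact h1
    · rcases lt_or_ge t γ.length with ht2 | ht2
      · rw [List.getElem?_append_right (by rw [List.length_drop]; omega)]
        rw [List.getElem?_take, if_pos (by rw [List.length_drop]; omega),
          List.length_drop]
        have h1 := h t ht2
        have h2 : (t + D) % γ.length = t - (γ.length - D % γ.length) := by
          rw [Nat.add_mod, Nat.mod_eq_of_lt ht2,
            Nat.mod_eq_sub_mod (show t + D % γ.length ≥ γ.length by omega),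
            Nat.mod_eq_of_lt (by omega)]
          omega
        rw [h2] at h1
        exact h1
      · rw [List.getElem?_eq_none, List.getElem?_eq_none ht2]
        rw [List.length_append, List.length_drop, List.length_take]
        omega
  refine prim_no_rot hp (List.take_append_drop (D % γ.length) γ).symm hR.symm ?_ ?_
  · apply List.length_pos_iff.mp
    rw [List.length_take]
    omega
  · apply List.length_pos_iff.mp
    rw [List.length_drop]
    omega

end LS
namespace LS
open List
variable {α : Type*}

theorem k3_end {g₁ g₂ y z : List α} {n : ℕ}
    (hzprim : Primitive z) (hgprim : Primitive (g₁ ++ g₂))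
    (hg₁ : g₁ ≠ []) (hg₂ : g₂ ≠ []) (hy : y ≠ []) (hn : 2 ≤ n)
    (hzdef : z = (g₁ ++ g₂) ++ g₁)
    (htakeq : List.take g₂.length z = g₂)
    (hyq : wpow y n = List.drop g₂.length z ++ z)
    (hz3 : wpow z 3 = (z ++ g₂) ++ wpow y n)
    (hbig : z.length ≤ 2 * g₂.length) : False := by
  have hP : 0 < g₁.length := List.length_pos_iff.mpr hg₁
  have hLB : 0 < g₂.length := List.length_pos_iff.mpr hg₂
  have hLy : 0 < y.length := List.length_pos_iff.mpr hy
  have hglen : (g₁ ++ g₂).length = g₁.length + g₂.length := List.length_append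
  have hLz : z.length = 2 * g₁.length + g₂.length := by
    rw [hzdef, List.length_append, hglen]; omega
  have hLBP : 2 * g₁.length ≤ g₂.length := by omega
  have hqlen : (List.drop g₂.length z).length = 2 * g₁.length := by
    rw [List.length_drop]; omega
  have hslen : n * y.length = 2 * g₁.length + z.length := by
    have h0 := congrArg List.length hyq
    rw [length_wpow, List.length_append, hqlen] at h0
    omega
  have hg₂pre : g₂ = List.take g₂.length (g₁ ++ g₂) := by
    conv_lhs => rw [← htakeq, hzdef]
    exact take_eq_of_prefix_eq rfl (by rw [hglen]; omega)
  have hg₂ext := prefix_ext g₁ g₂.length g₂ hg₂pre (Nat.le_mul_of_pos_right _ hP)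
  obtain ⟨κ, ρ₂, hκρ, hρ₂⟩ : ∃ κ ρ₂, κ * g₁.length + ρ₂ = g₂.length ∧ ρ₂ < g₁.length :=
    ⟨g₂.length / g₁.length, g₂.length % g₁.length,
      by rw [Nat.mul_comm]; exact Nat.div_add_mod _ _, Nat.mod_lt _ hP⟩
  have hg₂BA : g₂ = wpow g₁ κ ++ List.take ρ₂ g₁ := by
    have hmul : g₂.length ≤ g₂.length * g₁.length := Nat.le_mul_of_pos_right _ hP
    calc g₂ = List.take g₂.length (wpow g₁ g₂.length) := hg₂ext
      _ = List.take (κ * g₁.length + ρ₂) (wpow g₁ g₂.length) := by rw [hκρ]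
      _ = wpow g₁ κ ++ List.take ρ₂ g₁ := take_wpow (le_of_lt hρ₂) (by omega)
  have hκ2 : 2 ≤ κ := by
    by_contra hc
    push_neg at hc
    have : κ * g₁.length ≤ 1 * g₁.length := Nat.mul_le_mul_right _ (by omega)
    omega
  rcases Nat.eq_zero_or_pos ρ₂ with hρ₂0 | hρ₂pos
  · have hgg : g₁ ++ g₂ = wpow g₁ (κ + 1) := by
      rw [hg₂BA, hρ₂0, List.take_zero, List.append_nil, ← wpow_succ]
    have h1 := hgprim.2 g₁ (κ + 1) hgg
    omega
  have hAne : List.drop ρ₂ g₁ ≠ [] := by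
    apply List.length_pos_iff.mp; rw [List.length_drop]; omega
  have hBne : List.take ρ₂ g₁ ≠ [] := by
    apply List.length_pos_iff.mp; rw [List.length_take]; omega
  obtain ⟨γ, a₁, hγprim, ha₁, hg₁γ⟩ := exists_prim_root g₁.length g₁ le_rfl hg₁
  have hLγ : g₁.length = a₁ * γ.length := by rw [hg₁γ, length_wpow]
  have hγpos : 0 < γ.length := List.length_pos_iff.mpr hγprim.1
  have hγP : γ.length ≤ g₁.length := by
    have := Nat.mul_le_mul_right γ.length ha₁
    omega
  obtain ⟨f, e, hfprim, he, hyf⟩ := exists_prim_root y.length y le_rfl hy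
  have hLf : y.length = e * f.length := by rw [hyf, length_wpow]
  have hfpos : 0 < f.length := List.length_pos_iff.mpr hfprim.1
  have hfy : f.length ≤ y.length := by
    have := Nat.mul_le_mul_right f.length he
    omega
  have hyz : y.length < z.length := by
    have h2 : 2 * y.length ≤ n * y.length := Nat.mul_le_mul_right _ hn
    omega
  rcases le_or_gt f.length (2 * g₁.length) with hα | hβ
  · -- α : short root of y, slide z and synchronize
    have hsf : wpow y n = wpow f (e * n) := by rw [hyf, wpow_wpow]
    have hdropq : List.drop (2 * g₁.length) (wpow y n) = z := by
      rw [hyq, ← hqlen, List.drop_left]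
    have hz1 : List.take z.length (List.drop (2 * g₁.length) (wpow y n)) = z := by
      rw [hdropq, List.take_length]
    have hEn : e * n * f.length = n * y.length := by rw [hLf]; ring
    have hz2 : List.take z.length
        (List.drop (2 * g₁.length - f.length) (wpow y n)) = z := by
      rw [hsf]
      rw [hsf] at hz1
      rw [← slide (by omega :
          (2 * g₁.length - f.length) + f.length + z.length ≤ e * n * f.length),
        show 2 * g₁.length - f.length + f.length = 2 * g₁.length by omega]
      exact hz1
    have hsz3 : wpow y n = List.drop (z.length + g₂.length) (wpow z 3) := by
      rw [hz3, show z.length + g₂.length = (z ++ g₂).length by simp, List.drop_left]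
    have hz4 : List.take z.length (List.drop ((z.length + g₂.length) +
        (2 * g₁.length - f.length)) (wpow z 3)) = z := by
      rw [← List.drop_drop, ← hsz3]
      exact hz2
    have hocc := slice_occ hz4
    have hdvd := sync hzprim hocc.symm
    rw [List.length_take, length_wpow, min_eq_left (by omega)] at hdvd
    have h2z : z.length ∣ 2 * z.length := ⟨2, by ring⟩
    have h3 : z.length ∣ f.length := by
      have h4 := Nat.dvd_sub h2z hdvd
      rwa [show 2 * z.length - ((z.length + g₂.length) + (2 * g₁.length - f.length))
        = f.length by omega] at h4
    have := Nat.le_of_dvd hfpos h3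
    omega
  · -- β : long root of y
    have hyP : 2 * g₁.length < y.length := by omega
    have hsq : wpow y n = List.drop g₂.length z ++ z := hyq
    have hgA : (g₁ ++ g₂) ++ List.drop ρ₂ g₁ = wpow g₁ (κ + 2) := by
      rw [hg₂BA]
      calc (g₁ ++ (wpow g₁ κ ++ List.take ρ₂ g₁)) ++ List.drop ρ₂ g₁
          = (g₁ ++ wpow g₁ κ) ++ (List.take ρ₂ g₁ ++ List.drop ρ₂ g₁) := by
            simp [append_assoc]
        _ = wpow g₁ (κ + 1) ++ g₁ := by rw [List.take_append_drop, ← wpow_succ]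
        _ = wpow g₁ (κ + 2) := (wpow_succ' g₁ (κ + 1)).symm
    have hgpat : ∀ u, u < g₁.length + g₂.length → (g₁ ++ g₂)[u]? = γ[u % γ.length]? := by
      intro u hu
      have h1 : ((g₁ ++ g₂) ++ List.drop ρ₂ g₁)[u]? = (g₁ ++ g₂)[u]? :=
        List.getElem?_append_left (by rw [hglen]; omega)
      rw [← h1, hgA, show wpow g₁ (κ + 2) = wpow γ (a₁ * (κ + 2)) by rw [hg₁γ, wpow_wpow]]
      apply getElem?_wpow
      have he1 : a₁ * (κ + 2) * γ.length = κ * g₁.length + 2 * g₁.length := by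
        rw [hLγ]; ring
      omega
    have hSG : ∀ idx u, idx = 2 * g₁.length + u → u < g₁.length + g₂.length →
        (wpow y n)[idx]? = γ[u % γ.length]? := by
      intro idx u hidx hu
      rw [hsq, hidx, List.getElem?_append_right (by rw [hqlen]; omega)]
      rw [hqlen, show 2 * g₁.length + u - 2 * g₁.length = u by omega]
      rw [hzdef, List.getElem?_append_left (by rw [hglen]; omega)]
      exact hgpat u hu
    have hST : ∀ idx u, idx = 3 * g₁.length + g₂.length + u → u < g₁.length →
        (wpow y n)[idx]? = γ[u % γ.length]? := by
      intro idx u hidx hu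
      rw [hsq, hidx, List.getElem?_append_right (by rw [hqlen]; omega)]
      rw [hqlen, show 3 * g₁.length + g₂.length + u - 2 * g₁.length
        = (g₁ ++ g₂).length + u by rw [hglen]; omega]
      rw [hzdef, List.getElem?_append_right (by omega : (g₁ ++ g₂).length ≤ (g₁ ++ g₂).length + u)]
      rw [show (g₁ ++ g₂).length + u - (g₁ ++ g₂).length = u by omega]
      rw [hg₁γ]
      exact getElem?_wpow (by omega)
    have hSQ : ∀ idx, idx < 2 * g₁.length →
        (wpow y n)[idx]? = (List.drop g₂.length z)[idx]? := by
      intro idx h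
      rw [hsq, List.getElem?_append_left (by rw [hqlen]; omega)]
    have hsplit0 : wpow y n = y ++ wpow y (n - 1) := by
      conv_lhs => rw [show n = (n - 1) + 1 by omega]
      rfl
    have hsplit1 : wpow y (n - 1) = y ++ wpow y (n - 2) := by
      conv_lhs => rw [show n - 1 = (n - 2) + 1 by omega]
      rfl
    have hsplit2 : wpow y n = wpow y (n - 1) ++ y := by
      conv_lhs => rw [show n = (n - 1) + 1 by omega]
      exact wpow_succ' y (n - 1)
    have hYP : ∀ j, j < y.length → y[j]? = (wpow y n)[j]? := by
      intro j hj
      rw [hsplit0]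
      exact (List.getElem?_append_left hj).symm
    have hYS : ∀ j, j < y.length → y[j]? = (wpow y n)[(n - 1) * y.length + j]? := by
      intro j hj
      rw [hsplit2, List.getElem?_append_right (by rw [length_wpow]; omega)]
      rw [length_wpow, show (n - 1) * y.length + j - (n - 1) * y.length = j by omega]
    have hYB1 : ∀ j, j < y.length → y[j]? = (wpow y n)[y.length + j]? := by
      intro j hj
      rw [hsplit0, List.getElem?_append_right (by omega : y.length ≤ y.length + j)]
      rw [show y.length + j - y.length = j by omega, hsplit1]
      exact (List.getElem?_append_left hj).symm
    have hn1Ly : (n - 1) * y.length + y.length = n * y.length := by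
      have h0 := Nat.succ_mul (n - 1) y.length
      rw [Nat.succ_eq_add_one, show n - 1 + 1 = n by omega] at h0
      omega
    have hdvdP : γ.length ∣ g₁.length := ⟨a₁, by rw [hLγ]; ring⟩
    rcases lt_or_ge y.length (3 * g₁.length) with hβ1 | hβ2
    · -- β1 : 2|g₁| < |y| < 3|g₁|
      have hn3 : 3 ≤ n := by
        rcases eq_or_lt_of_le hn with h2 | h3
        · exfalso; rw [← h2] at hslen; omega
        · omega
      have h3Ly : 3 * y.length ≤ n * y.length := Nat.mul_le_mul_right _ hn3
      have hdvd : γ.length ∣ y.length := by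
        apply rot_dvd hγprim
        intro t ht
        have hper := hasPeriod_wpow y n
        have hper1 := hper (2 * g₁.length + t) (by rw [length_wpow]; omega)
        have hA := hSG (2 * g₁.length + t) t rfl (by omega)
        have hB := hSG (2 * g₁.length + t + y.length) (t + y.length) (by omega) (by omega)
        rw [hper1, hA] at hB
        rw [Nat.mod_eq_of_lt ht] at hB
        exact hB.symm
      obtain ⟨ey, hey⟩ : ∃ ey, ey * γ.length = y.length :=
        ⟨y.length / γ.length, Nat.div_mul_cancel hdvd⟩
      obtain ⟨cc, hcc⟩ := Nat.dvd_sub hdvd (hdvdP.mul_left 2)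
      have hyγ : y = wpow γ ey := by
        apply List.ext_getElem?
        intro j
        rcases lt_or_ge j y.length with hj | hj
        · have h1 := hYB1 j hj
          have h2 := hSG (y.length + j) (y.length + j - 2 * g₁.length) (by omega) (by omega)
          rw [h2] at h1
          rw [h1, getElem?_wpow (show j < ey * γ.length by omega)]
          congr 1
          rw [show y.length + j - 2 * g₁.length = j + cc * γ.length by
            have := Nat.mul_comm γ.length cc; omega,
            Nat.add_mul_mod_self_right]
        · rw [List.getElem?_eq_none (by omega),
            List.getElem?_eq_none (by rw [length_wpow]; omega)]
      have heypos : 1 ≤ ey := by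
        rcases Nat.eq_zero_or_pos ey with h0 | h0
        · rw [h0] at hey; omega
        · exact h0
      have hfeq : f = γ := prim_root_unique hfprim hγprim he heypos (hyf.symm.trans hyγ)
      have : f.length = γ.length := by rw [hfeq]
      omega
    · -- β2 : |y| ≥ 3|g₁|
      have h2Ly : 2 * y.length ≤ n * y.length := Nat.mul_le_mul_right _ hn
      have hLy1 : y.length ≤ (n - 1) * y.length := Nat.le_mul_of_pos_left _ (by omega)
      have hdvd : γ.length ∣ y.length := by
        apply rot_dvd hγprim
        intro t ht
        have hj : y.length - g₁.length + t < y.length := by omega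
        have hYPj := hYP _ hj
        have hYSj := hYS _ hj
        have hA := hSG (y.length - g₁.length + t)
          (y.length - g₁.length + t - 2 * g₁.length) (by omega) (by omega)
        have hB := hST ((n - 1) * y.length + (y.length - g₁.length + t)) t (by omega) (by omega)
        rw [← hYPj] at hA
        rw [← hYSj] at hB
        rw [hA] at hB
        obtain ⟨c2, hc2⟩ := hdvdP
        have hmod : (y.length - g₁.length + t - 2 * g₁.length) % γ.length
            = (t + y.length) % γ.length := by
          have h32 : t + y.length =
              (y.length - g₁.length + t - 2 * g₁.length) + (3 * c2) * γ.length := by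
            have h33 : 3 * g₁.length = 3 * c2 * γ.length := by rw [hc2]; ring
            omega
          rw [h32, Nat.add_mul_mod_self_right]
        rw [hmod] at hB
        rw [hB, Nat.mod_eq_of_lt ht]
      have hq2 : ∀ id, id < 2 * g₁.length →
          (List.drop g₂.length z)[id]? = γ[id % γ.length]? := by
        intro id hid
        have h1 := hYP id (by omega)
        have h2 := hSQ id hid
        have h3 := hYS id (by omega)
        have h4 := hSG ((n - 1) * y.length + id)
          ((n - 1) * y.length + id - 2 * g₁.length) (by omega) (by omega)
        have e1 : (List.drop g₂.length z)[id]? = y[id]? := (h1.trans h2).symm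
        have e2 := h3.trans h4
        rw [e1, e2]
        congr 1
        obtain ⟨cq, hcq⟩ := Nat.dvd_sub (hdvd.mul_left (n - 1)) (hdvdP.mul_left 2)
        rw [show (n - 1) * y.length + id - 2 * g₁.length = id + cq * γ.length by
          have := Nat.mul_comm γ.length cq; omega,
          Nat.add_mul_mod_self_right]
      have hqg : List.drop g₂.length z = g₁ ++ g₁ := by
        apply List.ext_getElem?
        intro id
        rcases lt_or_ge id (2 * g₁.length) with hid | hid
        · rw [hq2 id hid, show g₁ ++ g₁ = wpow γ (a₁ + a₁) by rw [hg₁γ, ← wpow_add],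
            getElem?_wpow (show id < (a₁ + a₁) * γ.length by
              have : (a₁ + a₁) * γ.length = 2 * (a₁ * γ.length) := by ring
              omega)]
        · rw [List.getElem?_eq_none (by rw [hqlen]; omega),
            List.getElem?_eq_none (by rw [List.length_append]; omega)]
      have hκ1 : (κ - 1) * g₁.length + g₁.length = κ * g₁.length := by
        have h0 := Nat.succ_mul (κ - 1) g₁.length
        rw [Nat.succ_eq_add_one, show κ - 1 + 1 = κ by omega] at h0
        omega
      have hqstruct : List.drop g₂.length z =
          (List.drop ρ₂ g₁ ++ List.take ρ₂ g₁) ++ g₁ := by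
        rw [hzdef, List.drop_append,
          show g₂.length - (g₁ ++ g₂).length = 0 by rw [hglen]; omega, List.drop_zero]
        congr 1
        rw [List.drop_append,
          List.drop_eq_nil_of_le (by omega : g₁.length ≤ g₂.length), List.nil_append]
        rw [show g₂.length - g₁.length = (κ - 1) * g₁.length + ρ₂ by omega]
        conv_lhs => rw [hg₂BA]
        rw [show wpow g₁ κ = wpow g₁ (κ - 1) ++ g₁ by
          conv_lhs => rw [show κ = (κ - 1) + 1 by omega, wpow_succ']]
        rw [List.append_assoc, List.drop_append,
          List.drop_eq_nil_of_le (by rw [length_wpow]; omega), List.nil_append,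
          show (κ - 1) * g₁.length + ρ₂ - (wpow g₁ (κ - 1)).length = ρ₂ by
            rw [length_wpow]; omega]
        rw [List.drop_append, show ρ₂ - g₁.length = 0 by omega,
          List.drop_zero]
      have hABBA : List.drop ρ₂ g₁ ++ List.take ρ₂ g₁ = g₁ :=
        List.append_cancel_right (hqstruct.symm.trans hqg)
      have hBA : List.take ρ₂ g₁ ++ List.drop ρ₂ g₁ = g₁ := List.take_append_drop _ _
      obtain ⟨t, ia, jb, hAt, hBt⟩ := comm_common_root (hABBA.trans hBA.symm)
      have hg₁t : g₁ = wpow t (jb + ia) := by rw [← hBA, hAt, hBt, ← wpow_add]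
      have hgt : g₁ ++ g₂ = wpow t (jb + ia + ((jb + ia) * κ + jb)) := by
        rw [hg₂BA, hBt, hg₁t, wpow_wpow, ← wpow_add, ← wpow_add]
      have hone := hgprim.2 t _ hgt
      have hiane : ia ≠ 0 := by rintro rfl; exact hAne hAt
      have hjbne : jb ≠ 0 := by rintro rfl; exact hBne hBt
      omega

end LS
namespace LS
open List
variable {α : Type*}

theorem prim_conj {a b : List α} (h : Primitive (a ++ b)) : Primitive (b ++ a) := by
  have hab : (a ++ b) ≠ [] := h.1
  constructor
  · intro h0
    apply hab
    have := congrArg List.length h0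
    rw [List.length_append] at this
    simp at this
    rw [this.1, this.2]
    rfl
  · intro t e hbae
    by_contra hne1
    rcases Nat.eq_zero_or_pos e with he0 | hepos
    · rw [he0, wpow_zero] at hbae
      apply hab
      have := congrArg List.length hbae
      rw [List.length_append] at this
      simp at this
      rw [this.1, this.2]
      rfl
    rcases eq_or_ne b [] with hb0 | hb
    · rw [hb0, List.nil_append] at hbae
      rw [hb0, List.append_nil] at h
      exact hne1 (h.2 t e hbae)
    rcases eq_or_ne a [] with ha0 | ha
    · rw [ha0, List.append_nil] at hbae
      rw [ha0, List.nil_append] at h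
      exact hne1 (h.2 t e hbae)
    have h1 : wpow b 1 ++ wpow a 1 = wpow t e := by rw [wpow_one, wpow_one]; exact hbae
    have ht : t ≠ [] := by
      intro h0
      rw [h0, wpow_nil] at hbae
      exact hb (List.append_eq_nil_iff.mp hbae).1
    obtain ⟨t', _, heq'', _⟩ := swap_instance hepos ht (by rw [wpow_one]; exact ha) h1
    rw [wpow_one, wpow_one] at heq''
    exact hne1 (h.2 t' e heq'')

theorem main_prim (B : ℕ)
    (IH : ∀ (x y z : List α) (m n k : ℕ), 2 ≤ m → 2 ≤ n → 2 ≤ k →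
      wpow x m ++ wpow y n = wpow z k → (wpow z k).length < B →
      ∃ t, (∃ i, x = wpow t i) ∧ (∃ j, y = wpow t j) ∧ (∃ l, z = wpow t l))
    {x y z : List α} {m n k : ℕ} (hm : 2 ≤ m) (hn : 2 ≤ n) (hk : 2 ≤ k)
    (hx : x ≠ []) (hy : y ≠ []) (hzprim : Primitive z)
    (heq : wpow x m ++ wpow y n = wpow z k)
    (hasym : n * y.length ≤ m * x.length)
    (hB : (wpow z k).length ≤ B) :
    ∃ t, (∃ i, x = wpow t i) ∧ (∃ j, y = wpow t j) ∧ (∃ l, z = wpow t l) := by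
  have hz : z ≠ [] := hzprim.1
  have hzl : 0 < z.length := List.length_pos_iff.mpr hz
  have hxl : 0 < x.length := List.length_pos_iff.mpr hx
  have hyl : 0 < y.length := List.length_pos_iff.mpr hy
  have hlen : m * x.length + n * y.length = k * z.length := by
    have h0 := congrArg List.length heq
    rw [List.length_append, length_wpow, length_wpow, length_wpow] at h0
    exact h0
  rcases le_or_gt (x.length + z.length) (m * x.length) with hbig | hsmall
  · exact case1 hn (by omega) hz heq hbig
  have hk2z : 2 * z.length ≤ k * z.length := Nat.mul_le_mul_right _ hk
  have hmz : z.length ≤ m * x.length := by omega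
  have h2x : 2 * x.length ≤ m * x.length := Nat.mul_le_mul_right _ hm
  have hxz : x.length < z.length := by omega
  have hxmtake : wpow x m = List.take (m * x.length) (wpow z k) := by
    rw [← heq, show m * x.length = (wpow x m).length by rw [length_wpow], List.take_left]
  have hztake : z = List.take z.length (wpow x m) := by
    have h1 : List.take z.length (wpow z k) = List.take z.length (wpow x m) :=
      take_eq_of_prefix_eq heq (by rw [length_wpow]; omega)
    rw [take_wpow_self (by omega : 1 ≤ k)] at h1
    exact h1
  rcases Nat.eq_zero_or_pos (m * x.length - z.length) with hr0 | hrpos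
  · exfalso
    have hzeq : z = wpow x m := by
      have h2 : z.length = (wpow x m).length := by rw [length_wpow]; omega
      conv_lhs => rw [hztake, h2, List.take_length]
    have := hzprim.2 x m hzeq
    omega
  rcases le_or_gt (y.length + z.length) (n * y.length) with hybig | hysmall
  · obtain ⟨z', hz'len, heq', u, v, huv, hz'uv⟩ :=
      swap_instance (by omega : 1 ≤ k) hz (wpow_ne_nil hy (by omega : 1 ≤ n)) heq
    have hz'ne : z' ≠ [] := by apply List.length_pos_iff.mp; rw [hz'len]; omega
    obtain ⟨t, hty, htx, _⟩ := case1 hm (by omega) hz'ne heq' (by rw [hz'len]; omega)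
    exact finish_zroot hk heq htx hty
  have hyz : y.length < z.length := by
    have h2y : 2 * y.length ≤ n * y.length := Nat.mul_le_mul_right _ hn
    omega
  have hk3 : k = 2 ∨ k = 3 := by
    by_contra hc
    push_neg at hc
    have hk4 : 4 ≤ k := by omega
    have : 4 * z.length ≤ k * z.length := Nat.mul_le_mul_right _ hk4
    omega
  obtain ⟨g, i, hgprim, hi1, hxg⟩ := exists_prim_root x.length x le_rfl hx
  have hgne : g ≠ [] := hgprim.1
  have hgl : 0 < g.length := List.length_pos_iff.mpr hgne
  have hLxg : x.length = i * g.length := by rw [hxg, length_wpow]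
  have hgx : g.length ≤ x.length := by
    have := Nat.mul_le_mul_right g.length hi1
    omega
  have hxmg : wpow x m = wpow g (i * m) := by rw [hxg, wpow_wpow]
  have hmix : m * x.length = i * m * g.length := by rw [hLxg]; ring
  have hztakeg : z = List.take z.length (wpow g (i * m)) := by rw [← hxmg]; exact hztake
  obtain ⟨c, ρ₁, hcρ, hρ₁⟩ : ∃ c ρ₁, c * g.length + ρ₁ = z.length ∧ ρ₁ < g.length :=
    ⟨z.length / g.length, z.length % g.length,
      by rw [Nat.mul_comm]; exact Nat.div_add_mod _ _, Nat.mod_lt _ hgl⟩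
  have hzsplit : z = wpow g c ++ List.take ρ₁ g := by
    rw [hztakeg, ← hcρ]
    exact take_wpow (le_of_lt hρ₁) (by omega)
  rcases Nat.eq_zero_or_pos ρ₁ with hρ₁0 | hρ₁pos
  · exfalso
    have hzc : z = wpow g c := by rw [hzsplit, hρ₁0, List.take_zero, List.append_nil]
    have h1 := hzprim.2 g c hzc
    rw [h1, one_mul] at hcρ
    omega
  set g₁ := List.take ρ₁ g with hg₁def
  set g₂ := List.drop ρ₁ g with hg₂def
  have hg₁len : g₁.length = ρ₁ := by rw [hg₁def, List.length_take]; omega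
  have hg₂len : g₂.length = g.length - ρ₁ := by rw [hg₂def, List.length_drop]
  have hg₁ne : g₁ ≠ [] := by apply List.length_pos_iff.mp; omega
  have hg₂ne : g₂ ≠ [] := by apply List.length_pos_iff.mp; omega
  have hg12 : g = g₁ ++ g₂ := (List.take_append_drop ρ₁ g).symm
  have hc1 : 1 ≤ c := by
    by_contra hc0
    push_neg at hc0
    have hcz : c = 0 := by omega
    rw [hcz, Nat.zero_mul] at hcρ
    omega
  have hciM : c < i * m := by
    have h13 : c * g.length < i * m * g.length := by omega
    exact Nat.lt_of_mul_lt_mul_right h13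
  have hpdual : List.drop z.length (wpow x m) = g₂ ++ wpow g (i * m - c - 1) := by
    rw [hxmg, ← hcρ]
    exact drop_wpow (le_of_lt hρ₁) hciM
  have hzk1 : wpow z k = z ++ wpow z (k - 1) := by
    conv_lhs => rw [show k = (k - 1) + 1 by omega]
    rfl
  have hzk2 : wpow z (k - 1) = z ++ wpow z (k - 2) := by
    conv_lhs => rw [show k - 1 = (k - 2) + 1 by omega]
    rfl
  have hptake : List.drop z.length (wpow x m) = List.take (m * x.length - z.length) z := by
    have h1 : List.drop z.length (wpow z k) = wpow z (k - 1) := by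
      rw [hzk1, List.drop_left]
    have h2 : List.drop z.length (wpow z k) =
        List.drop z.length (wpow x m) ++ wpow y n := by
      rw [← heq, List.drop_append,
        show z.length - (wpow x m).length = 0 by rw [length_wpow]; omega, List.drop_zero]
    have h3 : List.drop z.length (wpow x m) ++ wpow y n = wpow z (k - 1) := by
      rw [← h2, h1]
    have hplen : (List.drop z.length (wpow x m)).length = m * x.length - z.length := by
      rw [List.length_drop, length_wpow]
    have h4 : List.take (m * x.length - z.length) (wpow z (k - 1)) =
        List.drop z.length (wpow x m) := by
      rw [← h3, ← hplen, List.take_left]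
    have h5 : List.take (m * x.length - z.length) (wpow z (k - 1)) =
        List.take (m * x.length - z.length) z :=
      take_eq_of_prefix_eq hzk2.symm (by omega)
    rw [← h4, h5]
  have hrg : m * x.length - z.length = (i * m - c - 1) * g.length + g₂.length := by
    have e1 : (i * m - c - 1) * g.length + (c + 1) * g.length = i * m * g.length := by
      rw [← Nat.add_mul]
      congr 1
      omega
    have e2 : (c + 1) * g.length = c * g.length + g.length := by ring
    omega
  rcases Nat.eq_zero_or_pos (i * m - c - 1) with hd0 | hdpos
  · -- d = 0 : the hard cases k = 2, 3
    have hp2 : List.drop z.length (wpow x m) = g₂ := by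
      rw [hpdual, hd0, wpow_zero, List.append_nil]
    have hrg2 : m * x.length - z.length = g₂.length := by
      rw [hd0, Nat.zero_mul, Nat.zero_add] at hrg
      exact hrg
    have htakeq : List.take g₂.length z = g₂ := by rw [← hrg2, ← hptake, hp2]
    have hxmz : wpow x m = z ++ g₂ := by
      conv_lhs => rw [← List.take_append_drop z.length (wpow x m)]
      rw [← hztake, hp2]
    rcases hk3 with hk2 | hk3'
    · -- k = 2
      subst hk2
      exfalso
      have hz2 : wpow z 2 = z ++ z := by
        rw [show (2 : ℕ) = 1 + 1 from rfl, wpow_add, wpow_one]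
      have hzeq2 : z = g₂ ++ wpow y n := by
        have h8 : z ++ (g₂ ++ wpow y n) = z ++ z := by
          rw [← List.append_assoc, ← hxmz, heq, hz2]
        exact (List.append_cancel_left h8).symm
      have hswap : g₂ ++ wpow g c = wpow (g₂ ++ g₁) c ++ g₂ := by
        have h9 := swap_pow g₂ g₁ c
        rw [← hg12] at h9
        exact h9
      have htrick : wpow (g₂ ++ g₁) (c + 1) = wpow g₂ 2 ++ wpow y n := by
        have h9 : g₂ ++ z = wpow (g₂ ++ g₁) (c + 1) := by
          rw [hzsplit, ← List.append_assoc, hswap, List.append_assoc, wpow_succ']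
        have h10 : g₂ ++ z = wpow g₂ 2 ++ wpow y n := by
          rw [hzeq2, show wpow g₂ 2 = g₂ ++ g₂ by
            rw [show (2 : ℕ) = 1 + 1 from rfl, wpow_add, wpow_one], List.append_assoc]
        rw [← h9, h10]
      have hhlen : (g₂ ++ g₁).length = g.length := by
        rw [List.length_append, hg12, List.length_append]
        omega
      have hlenlt : (wpow (g₂ ++ g₁) (c + 1)).length < B := by
        rw [length_wpow, hhlen]
        have e1 : (c + 1) * g.length = c * g.length + g.length := by ring
        have e2 : (wpow z 2).length = 2 * z.length := by rw [length_wpow]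
        omega
      obtain ⟨t, ⟨δ, hg₂t⟩, ⟨η, hyt⟩, ⟨σ, hht⟩⟩ :=
        IH g₂ y (g₂ ++ g₁) 2 n (c + 1) le_rfl hn (by omega) htrick.symm hlenlt
      have htl : 0 < t.length := by
        rcases Nat.eq_zero_or_pos t.length with h0 | h0
        · exfalso
          have ht0 : t = [] := List.eq_nil_of_length_eq_zero h0
          rw [ht0, wpow_nil] at hht
          have := congrArg List.length hht
          rw [hhlen, List.length_nil] at this
          omega
        · exact h0
      have hlg₂ : g₂.length = δ * t.length := by rw [hg₂t, length_wpow]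
      have hlh : g.length = σ * t.length := by
        have := congrArg List.length hht
        rw [length_wpow, hhlen] at this
        exact this
      have hσδ : δ ≤ σ := by
        have h11 : δ * t.length ≤ σ * t.length := by omega
        exact Nat.le_of_mul_le_mul_right h11 htl
      have hg₁t : g₁ = wpow t (σ - δ) := by
        have h11 : wpow t σ = wpow t δ ++ wpow t (σ - δ) := by
          rw [← wpow_add]
          congr 1
          omega
        have h12 : wpow t δ ++ g₁ = wpow t σ := by
          rw [← hht, ← hg₂t]
        exact List.append_cancel_left (h12.trans h11)
      have hgt : g = wpow t (σ - δ + δ) := by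
        rw [hg12, hg₁t, hg₂t, ← wpow_add]
      have hone := hgprim.2 t _ hgt
      have hδ1 : 1 ≤ δ := by
        rcases Nat.eq_zero_or_pos δ with h0 | h0
        · exfalso; rw [h0, wpow_zero] at hg₂t; exact hg₂ne hg₂t
        · exact h0
      have hσδ1 : 1 ≤ σ - δ := by
        rcases Nat.eq_zero_or_pos (σ - δ) with h0 | h0
        · exfalso; rw [h0, wpow_zero] at hg₁t; exact hg₁ne hg₁t
        · exact h0
      omega
    · -- k = 3
      subst hk3'
      exfalso
      have h2r : z.length ≤ 2 * (m * x.length - z.length) := by omega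
      have hg₂big : z.length ≤ 2 * g₂.length := by omega
      have hi1' : i = 1 := by
        by_contra hi2
        have hi2' : 2 ≤ i := by omega
        have h15 : 2 * g.length ≤ i * g.length := Nat.mul_le_mul_right _ hi2'
        omega
      have hc1' : c = 1 := by
        by_contra hcc
        have hc2 : 2 ≤ c := by omega
        have h15 : 2 * g.length ≤ c * g.length := Nat.mul_le_mul_right _ hc2
        omega
      have hm2 : m = 2 := by
        have h14 : i * m = 2 := by omega
        rw [hi1', one_mul] at h14
        exact h14
      have hzdef3 : z = (g₁ ++ g₂) ++ g₁ := by
        rw [hzsplit, hc1', wpow_one, hg12]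
      have hz3eq : wpow z 3 = (z ++ g₂) ++ wpow y n := by rw [← hxmz, heq]
      have hyq3 : wpow y n = List.drop g₂.length z ++ z := by
        have hzz : wpow z 3 = z ++ wpow z 2 := rfl
        have h8 : z ++ (g₂ ++ wpow y n) = z ++ wpow z 2 := by
          rw [← List.append_assoc, ← hxmz, heq, hzz]
        have h9 : g₂ ++ wpow y n = wpow z 2 := List.append_cancel_left h8
        have hzq : z = g₂ ++ List.drop g₂.length z := by
          conv_lhs => rw [← List.take_append_drop g₂.length z]
          rw [htakeq]
        have h10 : wpow z 2 = z ++ z := by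
          rw [show (2 : ℕ) = 1 + 1 from rfl, wpow_add, wpow_one]
        have h11 : wpow z 2 = g₂ ++ (List.drop g₂.length z ++ z) := by
          rw [h10]
          conv_lhs => rw [hzq]
          rw [List.append_assoc]
          congr 2
          rw [← hzq]
        have h12 : g₂ ++ wpow y n = g₂ ++ (List.drop g₂.length z ++ z) := by
          rw [h9, h11]
        exact List.append_cancel_left h12
      exact k3_end hzprim (by rw [← hg12]; exact hgprim) hg₁ne hg₂ne hy hn hzdef3
        htakeq hyq3 hz3eq hg₂big
  · -- d ≥ 1 : synchronization contradiction
    exfalso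
    have hdl : g.length ≤ (i * m - c - 1) * g.length :=
      Nat.le_mul_of_pos_left _ hdpos
    have h6 : List.take (m * x.length - z.length) z = g₂ ++ wpow g (i * m - c - 1) := by
      rw [← hptake, hpdual]
    have h7 : List.take (g₂.length + g.length) z = g₂ ++ g := by
      have h7a : List.take (g₂.length + g.length)
          (List.take (m * x.length - z.length) z) = List.take (g₂.length + g.length) z := by
        rw [List.take_take, min_eq_left (by omega)]
      rw [← h7a, h6, List.take_append,
        List.take_of_length_le (by omega : g₂.length ≤ g₂.length + g.length),
        show g₂.length + g.length - g₂.length = g.length by omega]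
      congr 1
      exact take_wpow_self hdpos
    have hgg2 : List.take (g₂.length + g.length) (wpow g (i * m)) = g₂ ++ g := by
      rw [← h7]
      conv_rhs => rw [hztakeg]
      rw [List.take_take, min_eq_left (by omega : g₂.length + g.length ≤ z.length)]
    have hrest : (g₂ ++ g) ++ List.drop (g₂.length + g.length) (wpow g (i * m)) =
        wpow g (i * m) := by
      rw [← hgg2]
      exact List.take_append_drop _ _
    have hd := sync hgprim hrest
    have := Nat.le_of_dvd (by omega) hd
    omega

theorem core : ∀ (B : ℕ) (x y z : List α) (m n k : ℕ), 2 ≤ m → 2 ≤ n → 2 ≤ k →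
    wpow x m ++ wpow y n = wpow z k → (wpow z k).length ≤ B →
    ∃ t, (∃ i, x = wpow t i) ∧ (∃ j, y = wpow t j) ∧ (∃ l, z = wpow t l) := by
  intro B
  induction B using Nat.strong_induction_on with
  | _ B IH =>
  intro x y z m n k hm hn hk heq hB
  have IH' : ∀ (x' y' z' : List α) (m' n' k' : ℕ), 2 ≤ m' → 2 ≤ n' → 2 ≤ k' →
      wpow x' m' ++ wpow y' n' = wpow z' k' → (wpow z' k').length < B →
      ∃ t, (∃ i, x' = wpow t i) ∧ (∃ j, y' = wpow t j) ∧ (∃ l, z' = wpow t l) := by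
    intro x' y' z' m' n' k' hm' hn' hk' heq' hlt
    exact IH (wpow z' k').length hlt x' y' z' m' n' k' hm' hn' hk' heq' le_rfl
  rcases eq_or_ne z [] with hz0 | hz
  · have hxy : wpow x m ++ wpow y n = [] := by rw [heq, hz0, wpow_nil]
    have hx0 := eq_nil_of_wpow_eq_nil (by omega : 1 ≤ m) (List.append_eq_nil_iff.mp hxy).1
    have hy0 := eq_nil_of_wpow_eq_nil (by omega : 1 ≤ n) (List.append_eq_nil_iff.mp hxy).2
    exact ⟨[], ⟨0, by rw [hx0]; rfl⟩, ⟨0, by rw [hy0]; rfl⟩, ⟨0, by rw [hz0]; rfl⟩⟩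
  rcases eq_or_ne x [] with hx0 | hx
  · have heq2 : wpow y n = wpow z k := by rw [← heq, hx0, wpow_nil, List.nil_append]
    obtain ⟨t, i, j, hyt, hzt⟩ := poweq heq2 hn (by omega)
    exact ⟨t, ⟨0, by rw [hx0]; rfl⟩, ⟨i, hyt⟩, ⟨j, hzt⟩⟩
  rcases eq_or_ne y [] with hy0 | hy
  · have heq2 : wpow x m = wpow z k := by rw [← heq, hy0, wpow_nil, List.append_nil]
    obtain ⟨t, i, j, hxt, hzt⟩ := poweq heq2 hm (by omega)
    exact ⟨t, ⟨i, hxt⟩, ⟨0, by rw [hy0]; rfl⟩, ⟨j, hzt⟩⟩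
  obtain ⟨ζ, E, hζprim, hE1, hzζ⟩ := exists_prim_root z.length z le_rfl hz
  have heqζ : wpow x m ++ wpow y n = wpow ζ (E * k) := by rw [heq, hzζ, wpow_wpow]
  have hEk : 2 ≤ E * k := le_trans hk (Nat.le_mul_of_pos_left k (by omega))
  have hzζeq : wpow ζ (E * k) = wpow z k := heqζ.symm.trans heq
  have hBζ : (wpow ζ (E * k)).length ≤ B := by rw [hzζeq]; exact hB
  rcases le_or_gt (n * y.length) (m * x.length) with hasym | hasym
  · obtain ⟨t, htx, hty, htζ⟩ := main_prim B IH' hm hn hEk hx hy hζprim heqζ hasym hBζ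
    obtain ⟨l, hζt⟩ := htζ
    exact ⟨t, htx, hty, ⟨l * E, by rw [hzζ, hζt, wpow_wpow]⟩⟩
  · obtain ⟨z', hz'len, heq', u, v, huv, hz'uv⟩ :=
      swap_instance (by omega : 1 ≤ E * k) hζprim.1 (wpow_ne_nil hy (by omega)) heqζ
    have hz'prim : Primitive z' := by
      rw [hz'uv]
      rw [huv] at hζprim
      exact prim_conj hζprim
    have hBz' : (wpow z' (E * k)).length ≤ B := by
      have l1 := congrArg List.length heq'
      have l2 := congrArg List.length heqζ
      rw [List.length_append] at l1 l2
      have l3 := congrArg List.length hzζeq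
      omega
    obtain ⟨t, hty, htx, _⟩ := main_prim B IH' hn hm hEk hy hx hz'prim heq'
      (le_of_lt hasym) hBz'
    exact finish_zroot hk heq htx hty

end LS


/-- Lyndon–Schützenberger: if `uᵐvⁿ = wᵏ ≠ ε` with `m, n, k ≥ 2`, then `u`, `v`, `w`
are powers of a common word. -/
theorem lyndon_schutzenberger_eq {α : Type*} (u v w : List α) (m n k : ℕ)
    (hm : 2 ≤ m) (hn : 2 ≤ n) (hk : 2 ≤ k)
    (heq : wpow u m ++ wpow v n = wpow w k) (hne : wpow w k ≠ []) :
    ∃ t : List α, (∃ i : ℕ, u = wpow t i) ∧ (∃ j : ℕ, v = wpow t j) ∧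
      (∃ l : ℕ, w = wpow t l) :=
  LS.core (wpow w k).length u v w m n k hm hn hk heq le_rfl
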